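/- Let n ≥ 1 and let C : ℝ → Matrix (Fin n) ℝ take symmetric values and be differentiable at t₀ with derivative Ċ(t₀). Set λ(t) := inf{ v·C(t)v : v ∈ ℝⁿ, ‖v‖ = 1 } (the smallest eigenvalue of C(t)), let E be the eigenspace of C(t₀) for the eigenvalue λ(t₀), and set τ := min{ e·Ċ(t₀)e : e ∈ E, ‖e‖ = 1 }. Then limsup_{h→0⁺} (λ(t₀+h) − λ(t₀))/h ≤ τ. -/

import Mathlib

open Matrix Filter Topology
/-- The Euclidean norm of a vector in `ℝⁿ`. -/
noncomputable def euclNorm {n : ℕ} (v : Fin n → ℝ) : ℝ := Real.sqrt (∑ i, v i ^ 2)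

lemma euclNorm_eq_norm {n : ℕ} (v : Fin n → ℝ) :
    euclNorm v = ‖(WithLp.equiv 2 (Fin n → ℝ)).symm v‖ := by
  rw [EuclideanSpace.norm_eq]
  simp [euclNorm, Real.norm_eq_abs, sq_abs]

lemma euclNorm_smul {n : ℕ} (c : ℝ) (v : Fin n → ℝ) : euclNorm (c • v) = |c| * euclNorm v := by
  rw [euclNorm_eq_norm, euclNorm_eq_norm, WithLp.equiv_symm_apply, WithLp.toLp_smul, norm_smul, Real.norm_eq_abs]

lemma euclNorm_pos {n : ℕ} {v : Fin n → ℝ} (hv : v ≠ 0) : 0 < euclNorm v := by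
  rw [euclNorm_eq_norm]
  simp only [norm_pos_iff]
  exact fun h => hv (by simpa using congrArg (WithLp.equiv 2 (Fin n → ℝ)) h)

lemma quad_smul {n : ℕ} (A : Matrix (Fin n) (Fin n) ℝ) (c : ℝ) (v : Fin n → ℝ) :
    (c • v) ⬝ᵥ A.mulVec (c • v) = c ^ 2 * (v ⬝ᵥ A.mulVec v) := by
  rw [Matrix.mulVec_smul, smul_dotProduct, dotProduct_smul]
  simp [smul_smul, sq]
  ring

lemma inner_toEuclideanLin {n : ℕ} (A : Matrix (Fin n) (Fin n) ℝ) (v : Fin n → ℝ) :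
    (inner ℝ ((Matrix.toEuclideanLin A) ((WithLp.equiv 2 (Fin n → ℝ)).symm v))
      ((WithLp.equiv 2 (Fin n → ℝ)).symm v) : ℝ) = v ⬝ᵥ A.mulVec v := by
  rw [WithLp.equiv_symm_apply, Matrix.toEuclideanLin_apply_piLp_toLp]
  simp only [PiLp.inner_apply, PiLp.toLp_apply, RCLike.inner_apply, starRingEnd_apply,
    star_trivial]
  simp [dotProduct, mulVec, mul_comm]

lemma euclNorm_sum_sq {n : ℕ} {v : Fin n → ℝ} (h : euclNorm v = 1) : ∑ i, v i ^ 2 = 1 := by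
  have := congrArg (· ^ 2) h
  simpa [euclNorm, Real.sq_sqrt (Finset.sum_nonneg fun i _ => sq_nonneg (v i))] using this

lemma abs_le_one_of_unit {n : ℕ} {v : Fin n → ℝ} (h : euclNorm v = 1) (i : Fin n) : |v i| ≤ 1 := by
  have hs := euclNorm_sum_sq h
  have : v i ^ 2 ≤ 1 := by
    rw [← hs]
    exact Finset.single_le_sum (fun j _ => sq_nonneg (v j)) (Finset.mem_univ i)
  nlinarith [abs_nonneg (v i), sq_abs (v i)]

lemma quad_abs_le {n : ℕ} (A : Matrix (Fin n) (Fin n) ℝ) {v : Fin n → ℝ} (h : euclNorm v = 1) :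
    |v ⬝ᵥ A.mulVec v| ≤ ∑ i, ∑ j, |A i j| := by
  have : v ⬝ᵥ A.mulVec v = ∑ i, ∑ j, v i * (A i j * v j) := by
    simp [dotProduct, Matrix.mulVec, Finset.mul_sum]
  rw [this]
  calc |∑ i, ∑ j, v i * (A i j * v j)| ≤ ∑ i, |∑ j, v i * (A i j * v j)| :=
        Finset.abs_sum_le_sum_abs _ _
    _ ≤ ∑ i, ∑ j, |v i * (A i j * v j)| :=
        Finset.sum_le_sum fun i _ => Finset.abs_sum_le_sum_abs _ _
    _ ≤ ∑ i, ∑ j, |A i j| := by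
        refine Finset.sum_le_sum fun i _ => Finset.sum_le_sum fun j _ => ?_
        rw [abs_mul, abs_mul]
        calc |v i| * (|A i j| * |v j|) ≤ 1 * (|A i j| * 1) :=
              mul_le_mul (abs_le_one_of_unit h i)
                (mul_le_mul_of_nonneg_left (abs_le_one_of_unit h j) (abs_nonneg _))
                (by positivity) zero_le_one
          _ = |A i j| := by ring

lemma quadSet_bddBelow_aux {n : ℕ} (A : Matrix (Fin n) (Fin n) ℝ) {v : Fin n → ℝ}
    (h : euclNorm v = 1) : -(∑ i, ∑ j, |A i j|) ≤ v ⬝ᵥ A.mulVec v := by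
  have hb := abs_le.mp (quad_abs_le A h)
  linarith [hb.1]

lemma exists_unit_vec (n : ℕ) (hn : 1 ≤ n) : ∃ v : Fin n → ℝ, euclNorm v = 1 := by
  refine ⟨fun i => if i = ⟨0, hn⟩ then 1 else 0, ?_⟩
  have : ∑ i : Fin n, (if i = ⟨0, hn⟩ then (1:ℝ) else 0) ^ 2 = 1 := by
    rw [Finset.sum_eq_single ⟨0, hn⟩] <;> simp +contextual
  simp [euclNorm, this]

lemma rayleigh_mem {n : ℕ} (A : Matrix (Fin n) (Fin n) ℝ) {v : Fin n → ℝ} (hv : v ≠ 0) :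
    ∃ u : Fin n → ℝ, euclNorm u = 1 ∧ u ⬝ᵥ A.mulVec u = (v ⬝ᵥ A.mulVec v) / euclNorm v ^ 2 := by
  have hc : 0 < euclNorm v := euclNorm_pos hv
  refine ⟨(euclNorm v)⁻¹ • v, ?_, ?_⟩
  · rw [euclNorm_smul, abs_of_pos (by positivity), inv_mul_cancel₀ hc.ne']
  · rw [quad_smul]; field_simp

lemma rayleigh_val {n : ℕ} (A : Matrix (Fin n) (Fin n) ℝ) (x : EuclideanSpace ℝ (Fin n))
    (hx : x ≠ 0) :
    ∃ u : Fin n → ℝ, euclNorm u = 1 ∧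
      RCLike.re (inner (𝕜 := ℝ) ((Matrix.toEuclideanLin A) x) x) / ‖x‖ ^ 2
        = u ⬝ᵥ A.mulVec u := by
  set v : Fin n → ℝ := WithLp.equiv 2 (Fin n → ℝ) x with hv
  have hxv : (WithLp.equiv 2 (Fin n → ℝ)).symm v = x := (WithLp.equiv 2 (Fin n → ℝ)).symm_apply_apply x
  have hvne : v ≠ 0 := by
    intro h
    apply hx
    rw [← hxv, h]
    rfl
  obtain ⟨u, hu, huv⟩ := rayleigh_mem A hvne
  refine ⟨u, hu, ?_⟩
  rw [← hxv, inner_toEuclideanLin, ← euclNorm_eq_norm, huv]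
  norm_num

lemma exists_unit_eigenvector {n : ℕ} (hn : 1 ≤ n) (A : Matrix (Fin n) (Fin n) ℝ)
    (hA : A.IsSymm) :
    ∃ e : Fin n → ℝ, euclNorm e = 1 ∧
      A.mulVec e = (sInf {x | ∃ v : Fin n → ℝ, euclNorm v = 1 ∧ x = v ⬝ᵥ A.mulVec v}) • e := by
  set S := {x | ∃ v : Fin n → ℝ, euclNorm v = 1 ∧ x = v ⬝ᵥ A.mulVec v} with hS
  have hSne : S.Nonempty := by
    obtain ⟨v, hv⟩ := exists_unit_vec n hn
    exact ⟨_, v, hv, rfl⟩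
  have hSbdd : BddBelow S :=
    ⟨-(∑ i, ∑ j, |A i j|), by rintro x ⟨v, hv, rfl⟩; exact quadSet_bddBelow_aux A hv⟩
  have hherm : A.IsHermitian := by
    show Aᴴ = A
    ext i j
    simp only [Matrix.conjTranspose_apply, star_trivial]
    have h2 := congrFun (congrFun hA j) i
    rw [Matrix.transpose_apply] at h2
    exact h2.symm
  haveI : Nontrivial (EuclideanSpace ℝ (Fin n)) := by
    obtain ⟨v, hv⟩ := exists_unit_vec n hn
    refine ⟨(WithLp.equiv 2 (Fin n → ℝ)).symm v, 0, fun h => ?_⟩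
    have := euclNorm_eq_norm v
    rw [h, hv] at this
    simpa using this
  have hT : (Matrix.toEuclideanLin A).IsSymmetric := Matrix.isHermitian_iff_isSymmetric.mp hherm
  have key := hT.hasEigenvalue_iInf_of_finiteDimensional
  have hiInf : (⨅ x : {x : EuclideanSpace ℝ (Fin n) // x ≠ 0},
      RCLike.re (inner (𝕜 := ℝ) ((Matrix.toEuclideanLin A) (x : EuclideanSpace ℝ (Fin n)))
        (x : EuclideanSpace ℝ (Fin n))) / ‖(x : EuclideanSpace ℝ (Fin n))‖ ^ 2) = sInf S := by
    apply le_antisymm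
    · apply le_csInf hSne
      rintro s ⟨w, hw, rfl⟩
      have hwne : (WithLp.equiv 2 (Fin n → ℝ)).symm w ≠ 0 := by
        intro h
        have := euclNorm_eq_norm w
        rw [h, hw] at this
        simpa using this
      have hbdd : BddBelow (Set.range fun x : {x : EuclideanSpace ℝ (Fin n) // x ≠ 0} =>
          RCLike.re (inner (𝕜 := ℝ) ((Matrix.toEuclideanLin A) (x : EuclideanSpace ℝ (Fin n)))
            (x : EuclideanSpace ℝ (Fin n))) / ‖(x : EuclideanSpace ℝ (Fin n))‖ ^ 2) := by
        refine ⟨-(∑ i, ∑ j, |A i j|), ?_⟩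
        rintro y ⟨⟨x, hx⟩, rfl⟩
        obtain ⟨u, hu, huv⟩ := rayleigh_val A x hx
        exact le_of_le_of_eq (quadSet_bddBelow_aux A hu) huv.symm
      have := ciInf_le hbdd (⟨(WithLp.equiv 2 (Fin n → ℝ)).symm w, hwne⟩ :
        {x : EuclideanSpace ℝ (Fin n) // x ≠ 0})
      refine le_trans this (le_of_eq ?_)
      rw [inner_toEuclideanLin, ← euclNorm_eq_norm, hw]
      norm_num
    · haveI : Nonempty {x : EuclideanSpace ℝ (Fin n) // x ≠ 0} := by
        obtain ⟨y, hy⟩ := exists_ne (0 : EuclideanSpace ℝ (Fin n))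
        exact ⟨⟨y, hy⟩⟩
      apply le_ciInf
      rintro ⟨x, hx⟩
      obtain ⟨u, hu, huv⟩ := rayleigh_val A x hx
      rw [huv]
      exact csInf_le hSbdd ⟨u, hu, rfl⟩
  rw [hiInf] at key
  have key' : Module.End.HasEigenvalue (Matrix.toEuclideanLin A) (sInf S) := by
    simpa using key
  obtain ⟨x, hx⟩ := key'.exists_hasEigenvector
  have hxeq : (Matrix.toEuclideanLin A) x = sInf S • x := hx.apply_eq_smul
  set w : Fin n → ℝ := WithLp.equiv 2 (Fin n → ℝ) x with hwdef
  have hwne : w ≠ 0 := by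
    intro h
    apply hx.2
    have := congrArg (WithLp.equiv 2 (Fin n → ℝ)).symm h
    simpa [hwdef] using this
  have hweq : A.mulVec w = sInf S • w := by
    have := congrArg (WithLp.equiv 2 (Fin n → ℝ)) hxeq
    simpa [hwdef] using this
  refine ⟨(euclNorm w)⁻¹ • w, ?_, ?_⟩
  · rw [euclNorm_smul, abs_of_pos (inv_pos.mpr (euclNorm_pos hwne))]
    exact inv_mul_cancel₀ (euclNorm_pos hwne).ne'
  · rw [Matrix.mulVec_smul, hweq]
    exact smul_comm _ _ _

lemma quadSet_bddBelow {n : ℕ} (A : Matrix (Fin n) (Fin n) ℝ) :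
    BddBelow {x | ∃ v : Fin n → ℝ, euclNorm v = 1 ∧ x = v ⬝ᵥ A.mulVec v} :=
  ⟨-(∑ i, ∑ j, |A i j|), by rintro x ⟨v, hv, rfl⟩; exact quadSet_bddBelow_aux A hv⟩

lemma quadSet_nonempty {n : ℕ} (hn : 1 ≤ n) (A : Matrix (Fin n) (Fin n) ℝ) :
    {x | ∃ v : Fin n → ℝ, euclNorm v = 1 ∧ x = v ⬝ᵥ A.mulVec v}.Nonempty := by
  obtain ⟨v, hv⟩ := exists_unit_vec n hn
  exact ⟨_, v, hv, rfl⟩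

lemma sInf_quad_lower {n : ℕ} (hn : 1 ≤ n) (A B : Matrix (Fin n) (Fin n) ℝ) :
    sInf {x | ∃ v : Fin n → ℝ, euclNorm v = 1 ∧ x = v ⬝ᵥ B.mulVec v}
      - ∑ i, ∑ j, |A i j - B i j|
    ≤ sInf {x | ∃ v : Fin n → ℝ, euclNorm v = 1 ∧ x = v ⬝ᵥ A.mulVec v} := by
  apply le_csInf (quadSet_nonempty hn A)
  rintro s ⟨v, hv, rfl⟩
  have h1 : v ⬝ᵥ A.mulVec v - v ⬝ᵥ B.mulVec v = v ⬝ᵥ (A - B).mulVec v := by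
    rw [Matrix.sub_mulVec, dotProduct_sub]
  have h2 := abs_le.mp (quad_abs_le (A - B) hv)
  have h3 : sInf {x | ∃ v : Fin n → ℝ, euclNorm v = 1 ∧ x = v ⬝ᵥ B.mulVec v} ≤ v ⬝ᵥ B.mulVec v :=
    csInf_le (quadSet_bddBelow B) ⟨v, hv, rfl⟩
  have h4 : ∀ i j, (A - B) i j = A i j - B i j := fun i j => rfl
  simp only [h4] at h2
  linarith [h2.1]

lemma hasDerivAt_quad {n : ℕ} (C : ℝ → Matrix (Fin n) (Fin n) ℝ) (C' : Matrix (Fin n) (Fin n) ℝ)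
    (t₀ : ℝ) (hderiv : ∀ i j, HasDerivAt (fun t => C t i j) (C' i j) t₀) (e : Fin n → ℝ) :
    HasDerivAt (fun t => e ⬝ᵥ (C t).mulVec e) (e ⬝ᵥ C'.mulVec e) t₀ := by
  have key : HasDerivAt (fun t => ∑ i, ∑ j, e i * (C t i j * e j))
      (∑ i, ∑ j, e i * (C' i j * e j)) t₀ := by
    apply HasDerivAt.fun_sum
    intro i _
    apply HasDerivAt.fun_sum
    intro j _
    exact ((hderiv i j).mul_const (e j)).const_mul (e i)
  have h1 : (fun t => e ⬝ᵥ (C t).mulVec e) = fun t => ∑ i, ∑ j, e i * (C t i j * e j) := by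
    funext t; simp [dotProduct, Matrix.mulVec, Finset.mul_sum]
  have h2 : e ⬝ᵥ C'.mulVec e = ∑ i, ∑ j, e i * (C' i j * e j) := by
    simp [dotProduct, Matrix.mulVec, Finset.mul_sum]
  rw [h1, h2]
  exact key

lemma tendsto_slope_right {f : ℝ → ℝ} {t₀ L : ℝ} (hf : HasDerivAt f L t₀) :
    Tendsto (fun h : ℝ => (f (t₀ + h) - f t₀) / h) (nhdsWithin 0 (Set.Ioi 0)) (𝓝 L) := by
  have hs := hasDerivAt_iff_tendsto_slope.mp hf
  have hmap : Tendsto (fun h : ℝ => t₀ + h) (nhdsWithin 0 (Set.Ioi 0))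
      (nhdsWithin t₀ {t₀}ᶜ) := by
    apply tendsto_nhdsWithin_of_tendsto_nhds_of_eventually_within
    · have : Tendsto (fun h : ℝ => t₀ + h) (𝓝 0) (𝓝 (t₀ + 0)) :=
        (continuous_const.add continuous_id).tendsto 0
      simpa using this.mono_left nhdsWithin_le_nhds
    · filter_upwards [self_mem_nhdsWithin] with h hh
      simp only [Set.mem_Ioi] at hh
      simp only [Set.mem_compl_iff, Set.mem_singleton_iff]
      linarith
  have := hs.comp hmap
  apply this.congr
  intro h
  simp [Function.comp, slope_def_field]

theorem stmt1 (n : ℕ) (hn : 1 ≤ n) (C : ℝ → Matrix (Fin n) (Fin n) ℝ)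
    (t₀ : ℝ) (C' : Matrix (Fin n) (Fin n) ℝ)
    (hsymm : ∀ t, (C t).IsSymm)
    (hderiv : ∀ i j, HasDerivAt (fun t => C t i j) (C' i j) t₀)
    (lam : ℝ → ℝ)
    (hlam : ∀ t, lam t =
      sInf {x | ∃ v : Fin n → ℝ, euclNorm v = 1 ∧ x = v ⬝ᵥ (C t).mulVec v})
    (τ : ℝ)
    (hτ : τ = sInf {x | ∃ e : Fin n → ℝ, (C t₀).mulVec e = lam t₀ • e ∧
      euclNorm e = 1 ∧ x = e ⬝ᵥ C'.mulVec e}) :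
    limsup (fun h : ℝ => (lam (t₀ + h) - lam t₀) / h) (nhdsWithin 0 (Set.Ioi 0)) ≤ τ := by
  rw [hτ]
  obtain ⟨e₀, he₀u, he₀⟩ := exists_unit_eigenvector hn (C t₀) (hsymm t₀)
  rw [← hlam t₀] at he₀
  have hne : {x | ∃ e : Fin n → ℝ, (C t₀).mulVec e = lam t₀ • e ∧
      euclNorm e = 1 ∧ x = e ⬝ᵥ C'.mulVec e}.Nonempty := ⟨_, e₀, he₀, he₀u, rfl⟩
  set M : ℝ := ∑ i, ∑ j, |C' i j| with hM
  have hr : Tendsto (fun h : ℝ => ∑ i, ∑ j, |(C (t₀ + h) i j - C t₀ i j) / h|)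
      (nhdsWithin 0 (Set.Ioi 0)) (𝓝 M) := by
    rw [hM]
    apply tendsto_finset_sum
    intro i _
    apply tendsto_finset_sum
    intro j _
    exact (tendsto_slope_right (hderiv i j)).abs
  have hcb : IsCoboundedUnder (· ≤ ·) (nhdsWithin (0:ℝ) (Set.Ioi 0))
      (fun h : ℝ => (lam (t₀ + h) - lam t₀) / h) := by
    apply isCoboundedUnder_le_of_eventually_le (nhdsWithin (0:ℝ) (Set.Ioi 0)) (x := -(M + 1))
    have hev1 : ∀ᶠ h in nhdsWithin (0:ℝ) (Set.Ioi 0),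
        ∑ i, ∑ j, |(C (t₀ + h) i j - C t₀ i j) / h| ≤ M + 1 :=
      hr.eventually (eventually_le_nhds (by linarith))
    filter_upwards [hev1, self_mem_nhdsWithin] with h h1 h2
    simp only [Set.mem_Ioi] at h2
    have hlow := sInf_quad_lower hn (C (t₀ + h)) (C t₀)
    rw [← hlam (t₀ + h), ← hlam t₀] at hlow
    have hD : (∑ i, ∑ j, |C (t₀ + h) i j - C t₀ i j|) / h
        = ∑ i, ∑ j, |(C (t₀ + h) i j - C t₀ i j) / h| := by
      rw [Finset.sum_div]
      refine Finset.sum_congr rfl fun i _ => ?_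
      rw [Finset.sum_div]
      refine Finset.sum_congr rfl fun j _ => ?_
      rw [abs_div, abs_of_pos h2]
    have hstep : -((∑ i, ∑ j, |C (t₀ + h) i j - C t₀ i j|) / h)
        ≤ (lam (t₀ + h) - lam t₀) / h := by
      rw [← neg_div]
      gcongr
      linarith
    rw [hD] at hstep
    linarith
  apply le_csInf hne
  rintro x ⟨e, heig, heu, rfl⟩
  have hf := hasDerivAt_quad C C' t₀ hderiv e
  have hq := tendsto_slope_right hf
  have hft₀ : e ⬝ᵥ (C t₀).mulVec e = lam t₀ := by
    rw [heig]
    have h1 : e ⬝ᵥ (lam t₀ • e) = lam t₀ * ∑ i, e i ^ 2 := by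
      simp only [dotProduct, Pi.smul_apply, smul_eq_mul, Finset.mul_sum, sq]
      exact Finset.sum_congr rfl fun i _ => by ring
    rw [h1, euclNorm_sum_sq heu, mul_one]
  have hev : ∀ᶠ h in nhdsWithin (0:ℝ) (Set.Ioi 0), (lam (t₀ + h) - lam t₀) / h
      ≤ (e ⬝ᵥ (C (t₀ + h)).mulVec e - e ⬝ᵥ (C t₀).mulVec e) / h := by
    filter_upwards [self_mem_nhdsWithin] with h hh
    simp only [Set.mem_Ioi] at hh
    have h1 : lam (t₀ + h) ≤ e ⬝ᵥ (C (t₀ + h)).mulVec e := by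
      rw [hlam (t₀ + h)]
      exact csInf_le (quadSet_bddBelow _) ⟨e, heu, rfl⟩
    gcongr
    linarith [hft₀]
  calc limsup (fun h : ℝ => (lam (t₀ + h) - lam t₀) / h) (nhdsWithin 0 (Set.Ioi 0))
      ≤ limsup (fun h : ℝ => (e ⬝ᵥ (C (t₀ + h)).mulVec e - e ⬝ᵥ (C t₀).mulVec e) / h)
        (nhdsWithin 0 (Set.Ioi 0)) := limsup_le_limsup hev hcb hq.isBoundedUnder_le
    _ = e ⬝ᵥ C'.mulVec e := hq.limsup_eq
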